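/- For any greedy policy (excluding versions with unnecessary path dependence on ambivalent epochs), E(M_G(n)) = (1/2) Σ_{k=1}^{n−1} E|Γ_R[R_G(k)] − Γ_S[S_G(k)]| + n(n−1)μ/4. -/

import Mathlib

open MeasureTheory Filter ProbabilityTheory
open scoped ENNReal

namespace GreedyAux5

noncomputable def gfun (r s : ℕ → ℝ) (a b : ℕ → ℕ) : ℕ → ℕ :=
  fun n => Nat.rec 0 (fun n m =>
    if (∑ j ∈ Finset.range (n - m), r (b j)) < ∑ i ∈ Finset.range m, s (a i)
      then m else m + 1) n

lemma gfun_zero (r s : ℕ → ℝ) (a b : ℕ → ℕ) : gfun r s a b 0 = 0 := rfl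

lemma gfun_succ (r s : ℕ → ℝ) (a b : ℕ → ℕ) (n : ℕ) :
    gfun r s a b (n + 1) =
      if (∑ j ∈ Finset.range (n - gfun r s a b n), r (b j))
          < ∑ i ∈ Finset.range (gfun r s a b n), s (a i)
        then gfun r s a b n else gfun r s a b n + 1 := rfl

lemma gfun_step (r s : ℕ → ℝ) (a b : ℕ → ℕ) (n : ℕ) :
    gfun r s a b (n + 1) = gfun r s a b n ∨ gfun r s a b (n + 1) = gfun r s a b n + 1 := by
  rw [gfun_succ]; split <;> simp

lemma gfun_le (r s : ℕ → ℝ) (a b : ℕ → ℕ) : ∀ n, gfun r s a b n ≤ n := by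
  intro n
  induction n with
  | zero => rw [gfun_zero]
  | succ n ih => rcases gfun_step r s a b n with h | h <;> omega

lemma gfun_congr (r s : ℕ → ℝ) {a b a' b' : ℕ → ℕ} : ∀ {n : ℕ},
    (∀ i < gfun r s a b n, a' i = a i) → (∀ j < n - gfun r s a b n, b' j = b j) →
    gfun r s a' b' n = gfun r s a b n := by
  intro n
  induction n with
  | zero => intro _ _; rw [gfun_zero, gfun_zero]
  | succ n ih =>
    intro ha hb
    have hst := gfun_step r s a b n
    have h1 : gfun r s a b n ≤ gfun r s a b (n+1) := by omega
    have h2 : n - gfun r s a b n ≤ (n+1) - gfun r s a b (n+1) := by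
      have := gfun_le r s a b n; omega
    have heq : gfun r s a' b' n = gfun r s a b n :=
      ih (fun i hi => ha i (lt_of_lt_of_le hi h1)) (fun j hj => hb j (lt_of_lt_of_le hj h2))
    have hsa : ∑ i ∈ Finset.range (gfun r s a' b' n), s (a' i)
        = ∑ i ∈ Finset.range (gfun r s a b n), s (a i) := by
      rw [heq]
      refine Finset.sum_congr rfl fun i hi => ?_
      rw [ha i (lt_of_lt_of_le (Finset.mem_range.1 hi) h1)]
    have hsb : ∑ j ∈ Finset.range (n - gfun r s a' b' n), r (b' j)
        = ∑ j ∈ Finset.range (n - gfun r s a b n), r (b j) := by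
      rw [heq]
      refine Finset.sum_congr rfl fun j hj => ?_
      rw [hb j (lt_of_lt_of_le (Finset.mem_range.1 hj) h2)]
    rw [gfun_succ, gfun_succ, hsa, hsb, heq]


lemma sum_range_eq_sum_ite {M : Type*} [AddCommMonoid M] (f : ℕ → M) {m N : ℕ} (h : m ≤ N) :
    ∑ i ∈ Finset.range m, f i = ∑ i ∈ Finset.range N, if i < m then f i else 0 := by
  rw [← Finset.sum_filter]
  congr 1
  ext i
  simp only [Finset.mem_filter, Finset.mem_range]
  omega

lemma meas_eq {Ω : Type} [MeasurableSpace Ω] {X Y : Ω → ℕ} (hX : Measurable X)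
    (hY : Measurable Y) : MeasurableSet {ω | X ω = Y ω} := by
  have : {ω | X ω = Y ω} = ⋃ c, X ⁻¹' {c} ∩ Y ⁻¹' {c} := by
    ext ω
    constructor
    · intro h; exact Set.mem_iUnion.2 ⟨X ω, ⟨rfl, h.symm⟩⟩
    · intro h
      obtain ⟨c, h1, h2⟩ := Set.mem_iUnion.1 h
      simp only [Set.mem_preimage, Set.mem_singleton_iff] at h1 h2
      show X ω = Y ω
      rw [h1, h2]
  rw [this]
  exact MeasurableSet.iUnion fun c =>
    (hX (measurableSet_singleton c)).inter (hY (measurableSet_singleton c))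

section Generic
variable {Ω : Type} [MeasurableSpace Ω]
lemma lintegral_comp_nat (P : Measure Ω) {X : Ω → ℕ} (hX : Measurable X)
    {E : Set Ω} (hE : MeasurableSet E) (w : ℕ → ENNReal) :
    ∫⁻ ω in E, w (X ω) ∂P = ∑' c, w c * P (E ∩ X ⁻¹' {c}) := by
  have hpt : ∀ ω, w (X ω) = ∑' c, Set.indicator (X ⁻¹' {c}) (fun _ => w c) ω := by
    intro ω
    rw [tsum_eq_single (X ω)]
    · simp
    · intro c hc
      apply Set.indicator_of_notMem
      simp only [Set.mem_preimage, Set.mem_singleton_iff]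
      exact fun h => hc h.symm
  calc ∫⁻ ω in E, w (X ω) ∂P
      = ∫⁻ ω in E, ∑' c, Set.indicator (X ⁻¹' {c}) (fun _ => w c) ω ∂P := by
        simp_rw [← hpt]
    _ = ∑' c, ∫⁻ ω in E, Set.indicator (X ⁻¹' {c}) (fun _ => w c) ω ∂P := by
        apply lintegral_tsum
        intro c
        exact ((measurable_const.indicator (hX (measurableSet_singleton c)))).aemeasurable
    _ = ∑' c, w c * P (E ∩ X ⁻¹' {c}) := by
        congr 1; ext c
        rw [lintegral_indicator (hX (measurableSet_singleton c)), setLIntegral_const,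
          Measure.restrict_apply (hX (measurableSet_singleton c))]
        rw [Set.inter_comm]

/-- A-type: matching indicator integrates like the weight of the old variable. -/
lemma lintegral_match (P : Measure Ω) {X Y : Ω → ℕ} (hX : Measurable X) (hY : Measurable Y)
    {E : Set Ω} (hE : MeasurableSet E) (w : ℕ → ℝ)
    (hfac : ∀ c, P ((E ∩ Y ⁻¹' {c}) ∩ X ⁻¹' {c})
      = P (E ∩ Y ⁻¹' {c}) * ENNReal.ofReal (w c)) :
    (∫⁻ ω in E, (if X ω = Y ω then (1 : ℝ≥0∞) else 0) ∂P)
      = ∫⁻ ω in E, ENNReal.ofReal (w (Y ω)) ∂P := by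
  classical
  rw [lintegral_comp_nat P hY hE (fun c => ENNReal.ofReal (w c))]
  have heq : (fun ω => (if X ω = Y ω then (1 : ℝ≥0∞) else 0))
      = Set.indicator {ω | X ω = Y ω} (fun _ => 1) := by
    funext ω
    by_cases h : X ω = Y ω
    · rw [if_pos h, Set.indicator_of_mem (show ω ∈ {ω | X ω = Y ω} from h)]
    · rw [if_neg h, Set.indicator_of_notMem (show ω ∉ {ω | X ω = Y ω} from h)]
  have hmeq : MeasurableSet {ω | X ω = Y ω} := by
    have : {ω | X ω = Y ω} = ⋃ c, X ⁻¹' {c} ∩ Y ⁻¹' {c} := by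
      ext ω
      constructor
      · intro h; exact Set.mem_iUnion.2 ⟨X ω, ⟨rfl, h.symm⟩⟩
      · intro h
        obtain ⟨c, h1, h2⟩ := Set.mem_iUnion.1 h
        simp only [Set.mem_preimage, Set.mem_singleton_iff] at h1 h2
        show X ω = Y ω
        rw [h1, h2]
    rw [this]
    exact MeasurableSet.iUnion fun c =>
      (hX (measurableSet_singleton c)).inter (hY (measurableSet_singleton c))
  rw [heq, lintegral_indicator hmeq, setLIntegral_const, one_mul,
    Measure.restrict_apply hmeq]
  have hdecomp : {ω | X ω = Y ω} ∩ E = ⋃ c, (E ∩ Y ⁻¹' {c}) ∩ X ⁻¹' {c} := by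
    ext ω
    simp only [Set.mem_inter_iff, Set.mem_setOf_eq, Set.mem_iUnion, Set.mem_preimage,
      Set.mem_singleton_iff]
    constructor
    · rintro ⟨hxy, hE'⟩; exact ⟨X ω, ⟨hE', hxy ▸ rfl⟩, rfl⟩
    · rintro ⟨c, ⟨hE', hyc⟩, hxc⟩; exact ⟨by rw [hxc, hyc], hE'⟩
  rw [hdecomp, measure_iUnion]
  · simp_rw [hfac]
    congr 1; ext c; ring
  · intro c c' hcc'
    simp only [Function.onFun, Set.disjoint_left]
    intro ω hω hω'
    exact hcc' (by
      have h1 : X ω = c := hω.2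
      have h2 : X ω = c' := hω'.2
      rw [← h1, h2])
  · intro c
    exact (hE.inter (hY (measurableSet_singleton c))).inter (hX (measurableSet_singleton c))

/-- B-type: integrating a weight of an independent fresh variable factorizes. -/
lemma lintegral_weight (P : Measure Ω) {X : Ω → ℕ} (hX : Measurable X)
    {E : Set Ω} (hE : MeasurableSet E) (u w : ℕ → ℝ≥0∞)
    (hfac : ∀ c, P (E ∩ X ⁻¹' {c}) = P E * w c) :
    ∫⁻ ω in E, u (X ω) ∂P = (∑' c, u c * w c) * P E := by
  rw [lintegral_comp_nat P hX hE u]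
  simp_rw [hfac]
  rw [← ENNReal.tsum_mul_right]
  congr 1; ext c; ring

lemma ofReal_max_eq {x y : ℝ} (hx : 0 ≤ x) (hy : 0 ≤ y) :
    ENNReal.ofReal (max x y)
      = (ENNReal.ofReal |x - y| + ENNReal.ofReal (x + y)) / 2 := by
  have habs : max x y = (|x - y| + (x + y)) / 2 := by
    rcases le_total x y with h | h
    · rw [max_eq_right h, abs_of_nonpos (by linarith)]; ring
    · rw [max_eq_left h, abs_of_nonneg (by linarith)]; ring
  rw [habs, ENNReal.ofReal_div_of_pos (by norm_num), ENNReal.ofReal_add (abs_nonneg _)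
    (by linarith)]
  norm_num


end Generic

variable {Ω : Type} [MeasurableSpace Ω]

lemma indep_cylinder (P : Measure Ω)
    (LR LS : ℕ → Ω → ℕ) (hmLR : ∀ i, Measurable (LR i)) (hmLS : ∀ i, Measurable (LS i))
    (hindep : iIndepFun (Sum.elim LR LS) P)
    (m nS : ℕ) (k : ℕ ⊕ ℕ)
    (hkL : ∀ i, i < m → Sum.inl i ≠ k) (hkR : ∀ j, j < nS → Sum.inr j ≠ k)
    (Q : (ℕ → ℕ) → (ℕ → ℕ) → Prop) (c : ℕ)
    (hQ : ∀ a b a' b', (∀ i < m, a' i = a i) → (∀ j < nS, b' j = b j) → Q a b → Q a' b') :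
    P ({ω | Q (fun i => LR i ω) (fun j => LS j ω)} ∩ {ω | Sum.elim LR LS k ω = c})
      = P {ω | Q (fun i => LR i ω) (fun j => LS j ω)}
        * P {ω | Sum.elim LR LS k ω = c} := by
  have hmeas : ∀ i : ℕ ⊕ ℕ, Measurable (Sum.elim LR LS i) := by
    rintro (i | j)
    · exact hmLR i
    · exact hmLS j
  set T : Finset (ℕ ⊕ ℕ) :=
    ((Finset.range m).image Sum.inl) ∪ ((Finset.range nS).image Sum.inr) with hT
  have hmemL : ∀ i : ℕ, Sum.inl i ∈ T ↔ i < m := by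
    intro i; simp [hT]
  have hmemR : ∀ j : ℕ, Sum.inr j ∈ T ↔ j < nS := by
    intro j; simp [hT]
  have hkT : k ∉ T := by
    intro hk
    rw [hT] at hk
    rcases Finset.mem_union.1 hk with h | h
    · obtain ⟨i, hi, hik⟩ := Finset.mem_image.1 h
      exact hkL i (Finset.mem_range.1 hi) hik
    · obtain ⟨j, hj, hjk⟩ := Finset.mem_image.1 h
      exact hkR j (Finset.mem_range.1 hj) hjk
  have hdisj : Disjoint T ({k} : Finset (ℕ ⊕ ℕ)) := Finset.disjoint_singleton_right.2 hkT
  have hIF := hindep.indepFun_finset T {k} hdisj hmeas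
  classical
  set A : (T → ℕ) → (ℕ → ℕ) := fun v i => if h : Sum.inl i ∈ T then v ⟨Sum.inl i, h⟩ else 0
    with hA
  set B : (T → ℕ) → (ℕ → ℕ) := fun v j => if h : Sum.inr j ∈ T then v ⟨Sum.inr j, h⟩ else 0
    with hB
  set t1 : Set (T → ℕ) := {v | Q (A v) (B v)} with ht1
  set t2 : Set (({k} : Finset (ℕ ⊕ ℕ)) → ℕ) :=
    {v | v ⟨k, Finset.mem_singleton_self k⟩ = c} with ht2
  have mt1 : MeasurableSet t1 := MeasurableSet.of_discrete
  have mt2 : MeasurableSet t2 := MeasurableSet.of_discrete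
  have h1 : (fun ω (i : T) => Sum.elim LR LS i.1 ω) ⁻¹' t1
      = {ω | Q (fun i => LR i ω) (fun j => LS j ω)} := by
    ext ω
    simp only [Set.mem_preimage, ht1, Set.mem_setOf_eq]
    set v : T → ℕ := fun i => Sum.elim LR LS i.1 ω with hv
    have haA : ∀ i < m, A v i = LR i ω := by
      intro i hi
      rw [hA]
      simp only
      rw [dif_pos ((hmemL i).2 hi)]
      rfl
    have hbB : ∀ j < nS, B v j = LS j ω := by
      intro j hj
      rw [hB]
      simp only
      rw [dif_pos ((hmemR j).2 hj)]
      rfl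
    constructor
    · intro h
      exact hQ (A v) (B v) _ _ (fun i hi => (haA i hi).symm) (fun j hj => (hbB j hj).symm) h
    · intro h
      exact hQ _ _ (A v) (B v) haA hbB h
  have h2 : (fun ω (i : ({k} : Finset (ℕ ⊕ ℕ))) => Sum.elim LR LS i.1 ω) ⁻¹' t2
      = {ω | Sum.elim LR LS k ω = c} := by
    ext ω
    simp only [Set.mem_preimage, ht2, Set.mem_setOf_eq]
  have := hIF.measure_inter_preimage_eq_mul t1 t2 mt1 mt2
  rw [h1, h2] at this
  exact this

/-! ### Events -/

variable (r s : ℕ → ℝ) (LR LS : ℕ → Ω → ℕ)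

def E1 (n m : ℕ) : Set Ω :=
  {ω | gfun r s (fun i => LR i ω) (fun j => LS j ω) n = m ∧
    (∑ i ∈ Finset.range m, s (LR i ω)) ≤ ∑ j ∈ Finset.range (n - m), r (LS j ω)}

def E2 (n m : ℕ) : Set Ω :=
  {ω | gfun r s (fun i => LR i ω) (fun j => LS j ω) n = m ∧
    (∑ j ∈ Finset.range (n - m), r (LS j ω)) < ∑ i ∈ Finset.range m, s (LR i ω)}

lemma mcomp {X : Ω → ℕ} (hX : Measurable X) (f : ℕ → ℝ) : Measurable fun ω => f (X ω) :=
  Measurable.of_discrete.comp hX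

lemma measurable_sumS (hmLR : ∀ i, Measurable (LR i)) (m : ℕ) :
    Measurable fun ω => ∑ i ∈ Finset.range m, s (LR i ω) :=
  Finset.measurable_sum _ fun i _ => mcomp (hmLR i) s

lemma measurable_sumR (hmLS : ∀ j, Measurable (LS j)) (N : ℕ) :
    Measurable fun ω => ∑ j ∈ Finset.range N, r (LS j ω) :=
  Finset.measurable_sum _ fun j _ => mcomp (hmLS j) r

lemma E1_meas (hmLR : ∀ i, Measurable (LR i)) (hmLS : ∀ j, Measurable (LS j))
    (RG : ℕ → Ω → ℕ) (n m : ℕ) (hRG : Measurable (RG n))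
    (hgf : ∀ ω, RG n ω = gfun r s (fun i => LR i ω) (fun j => LS j ω) n) :
    MeasurableSet (E1 r s LR LS n m) := by
  have heq : E1 r s LR LS n m = (RG n ⁻¹' {m}) ∩
      {ω | (∑ i ∈ Finset.range m, s (LR i ω)) ≤ ∑ j ∈ Finset.range (n - m), r (LS j ω)} := by
    ext ω
    simp only [E1, Set.mem_setOf_eq, Set.mem_inter_iff, Set.mem_preimage,
      Set.mem_singleton_iff, hgf ω]
  rw [heq]
  exact (hRG (measurableSet_singleton m)).inter
    (measurableSet_le (measurable_sumS s LR hmLR m) (measurable_sumR r LS hmLS (n - m)))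

lemma E2_meas (hmLR : ∀ i, Measurable (LR i)) (hmLS : ∀ j, Measurable (LS j))
    (RG : ℕ → Ω → ℕ) (n m : ℕ) (hRG : Measurable (RG n))
    (hgf : ∀ ω, RG n ω = gfun r s (fun i => LR i ω) (fun j => LS j ω) n) :
    MeasurableSet (E2 r s LR LS n m) := by
  have heq : E2 r s LR LS n m = (RG n ⁻¹' {m}) ∩
      {ω | (∑ j ∈ Finset.range (n - m), r (LS j ω)) < ∑ i ∈ Finset.range m, s (LR i ω)} := by
    ext ω
    simp only [E2, Set.mem_setOf_eq, Set.mem_inter_iff, Set.mem_preimage,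
      Set.mem_singleton_iff, hgf ω]
  rw [heq]
  exact (hRG (measurableSet_singleton m)).inter
    (measurableSet_lt (measurable_sumR r LS hmLS (n - m)) (measurable_sumS s LR hmLR m))


/-! ### Factorization facts -/

section Facts

variable {Ω : Type} [MeasurableSpace Ω] (P : Measure Ω) [IsProbabilityMeasure P]
variable (r s : ℕ → ℝ) (LR LS : ℕ → Ω → ℕ)
variable (hmLR : ∀ i, Measurable (LR i)) (hmLS : ∀ j, Measurable (LS j))
variable (hindep : iIndepFun (Sum.elim LR LS) P)
variable (hdR : ∀ i c, P {ω | LR i ω = c} = ENNReal.ofReal (r c))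
variable (hdS : ∀ j c, P {ω | LS j ω = c} = ENNReal.ofReal (s c))

/-- Stability of the `E1`-defining predicate with an extra `b j = c` clause. -/
lemma fact1 (hmLR : ∀ i, Measurable (LR i)) (hmLS : ∀ j, Measurable (LS j))
    (hindep : iIndepFun (Sum.elim LR LS) P)
    (hdR : ∀ i c, P {ω | LR i ω = c} = ENNReal.ofReal (r c))
    (hdS : ∀ j c, P {ω | LS j ω = c} = ENNReal.ofReal (s c))
    (n m j : ℕ) (hj : j < n - m) (c : ℕ) :
    P ((E1 r s LR LS n m ∩ LS j ⁻¹' {c}) ∩ LR m ⁻¹' {c})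
      = P (E1 r s LR LS n m ∩ LS j ⁻¹' {c}) * ENNReal.ofReal (r c) := by
  have hQ : ∀ a b a' b' : ℕ → ℕ, (∀ i < m, a' i = a i) → (∀ j' < n - m, b' j' = b j') →
      ((gfun r s a b n = m ∧
        (∑ i ∈ Finset.range m, s (a i)) ≤ ∑ j' ∈ Finset.range (n - m), r (b j')) ∧ b j = c) →
      ((gfun r s a' b' n = m ∧
        (∑ i ∈ Finset.range m, s (a' i)) ≤ ∑ j' ∈ Finset.range (n - m), r (b' j')) ∧
          b' j = c) := by
    rintro a b a' b' ha hb ⟨⟨h1, h2⟩, h3⟩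
    have hg : gfun r s a' b' n = m := by
      rw [← h1]
      exact gfun_congr r s (fun i hi => ha i (h1 ▸ hi)) (fun j' hj' => hb j' (h1 ▸ hj'))
    have hsa : ∑ i ∈ Finset.range m, s (a' i) = ∑ i ∈ Finset.range m, s (a i) :=
      Finset.sum_congr rfl fun i hi => by rw [ha i (Finset.mem_range.1 hi)]
    have hsb : ∑ j' ∈ Finset.range (n - m), r (b' j')
        = ∑ j' ∈ Finset.range (n - m), r (b j') :=
      Finset.sum_congr rfl fun j' hj' => by rw [hb j' (Finset.mem_range.1 hj')]
    exact ⟨⟨hg, by rw [hsa, hsb]; exact h2⟩, by rw [hb j hj]; exact h3⟩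
  have h := indep_cylinder P LR LS hmLR hmLS hindep m (n - m) (Sum.inl m)
      (fun i hi => by simp; omega) (fun j' _ => by simp)
      (fun a b => (gfun r s a b n = m ∧
        (∑ i ∈ Finset.range m, s (a i)) ≤ ∑ j' ∈ Finset.range (n - m), r (b j')) ∧ b j = c)
      c hQ
  have hset : {ω | (gfun r s (fun i => LR i ω) (fun j => LS j ω) n = m ∧
        (∑ i ∈ Finset.range m, s (LR i ω)) ≤ ∑ j' ∈ Finset.range (n - m), r (LS j' ω)) ∧
          LS j ω = c} = E1 r s LR LS n m ∩ LS j ⁻¹' {c} := by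
    ext ω
    simp only [Set.mem_setOf_eq, Set.mem_inter_iff, E1, Set.mem_preimage, Set.mem_singleton_iff]
  have hset2 : {ω | Sum.elim LR LS (Sum.inl m) ω = c} = LR m ⁻¹' {c} := rfl
  rw [hset, hset2] at h
  rw [h, show P (LR m ⁻¹' {c}) = ENNReal.ofReal (r c) from hdR m c]

lemma fact2 (hmLR : ∀ i, Measurable (LR i)) (hmLS : ∀ j, Measurable (LS j))
    (hindep : iIndepFun (Sum.elim LR LS) P)
    (hdR : ∀ i c, P {ω | LR i ω = c} = ENNReal.ofReal (r c))
    (hdS : ∀ j c, P {ω | LS j ω = c} = ENNReal.ofReal (s c))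
    (n m : ℕ) (c : ℕ) :
    P (E1 r s LR LS n m ∩ LR m ⁻¹' {c})
      = P (E1 r s LR LS n m) * ENNReal.ofReal (r c) := by
  have hQ : ∀ a b a' b' : ℕ → ℕ, (∀ i < m, a' i = a i) → (∀ j' < n - m, b' j' = b j') →
      (gfun r s a b n = m ∧
        (∑ i ∈ Finset.range m, s (a i)) ≤ ∑ j' ∈ Finset.range (n - m), r (b j')) →
      (gfun r s a' b' n = m ∧
        (∑ i ∈ Finset.range m, s (a' i)) ≤ ∑ j' ∈ Finset.range (n - m), r (b' j')) := by
    rintro a b a' b' ha hb ⟨h1, h2⟩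
    have hg : gfun r s a' b' n = m := by
      rw [← h1]
      exact gfun_congr r s (fun i hi => ha i (h1 ▸ hi)) (fun j' hj' => hb j' (h1 ▸ hj'))
    have hsa : ∑ i ∈ Finset.range m, s (a' i) = ∑ i ∈ Finset.range m, s (a i) :=
      Finset.sum_congr rfl fun i hi => by rw [ha i (Finset.mem_range.1 hi)]
    have hsb : ∑ j' ∈ Finset.range (n - m), r (b' j')
        = ∑ j' ∈ Finset.range (n - m), r (b j') :=
      Finset.sum_congr rfl fun j' hj' => by rw [hb j' (Finset.mem_range.1 hj')]
    exact ⟨hg, by rw [hsa, hsb]; exact h2⟩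
  have h := indep_cylinder P LR LS hmLR hmLS hindep m (n - m) (Sum.inl m)
      (fun i hi => by simp; omega) (fun j' _ => by simp)
      (fun a b => gfun r s a b n = m ∧
        (∑ i ∈ Finset.range m, s (a i)) ≤ ∑ j' ∈ Finset.range (n - m), r (b j'))
      c hQ
  have hset : {ω | gfun r s (fun i => LR i ω) (fun j => LS j ω) n = m ∧
        (∑ i ∈ Finset.range m, s (LR i ω)) ≤ ∑ j' ∈ Finset.range (n - m), r (LS j' ω)}
      = E1 r s LR LS n m := rfl
  have hset2 : {ω | Sum.elim LR LS (Sum.inl m) ω = c} = LR m ⁻¹' {c} := rfl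
  rw [hset, hset2] at h
  rw [h, show P (LR m ⁻¹' {c}) = ENNReal.ofReal (r c) from hdR m c]

lemma fact3 (hmLR : ∀ i, Measurable (LR i)) (hmLS : ∀ j, Measurable (LS j))
    (hindep : iIndepFun (Sum.elim LR LS) P)
    (hdR : ∀ i c, P {ω | LR i ω = c} = ENNReal.ofReal (r c))
    (hdS : ∀ j c, P {ω | LS j ω = c} = ENNReal.ofReal (s c))
    (n m i : ℕ) (hi : i < m) (c : ℕ) :
    P ((E2 r s LR LS n m ∩ LR i ⁻¹' {c}) ∩ LS (n - m) ⁻¹' {c})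
      = P (E2 r s LR LS n m ∩ LR i ⁻¹' {c}) * ENNReal.ofReal (s c) := by
  have hQ : ∀ a b a' b' : ℕ → ℕ, (∀ i' < m, a' i' = a i') → (∀ j' < n - m, b' j' = b j') →
      ((gfun r s a b n = m ∧
        (∑ j' ∈ Finset.range (n - m), r (b j')) < ∑ i' ∈ Finset.range m, s (a i')) ∧
          a i = c) →
      ((gfun r s a' b' n = m ∧
        (∑ j' ∈ Finset.range (n - m), r (b' j')) < ∑ i' ∈ Finset.range m, s (a' i')) ∧
          a' i = c) := by
    rintro a b a' b' ha hb ⟨⟨h1, h2⟩, h3⟩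
    have hg : gfun r s a' b' n = m := by
      rw [← h1]
      exact gfun_congr r s (fun i' hi' => ha i' (h1 ▸ hi')) (fun j' hj' => hb j' (h1 ▸ hj'))
    have hsa : ∑ i' ∈ Finset.range m, s (a' i') = ∑ i' ∈ Finset.range m, s (a i') :=
      Finset.sum_congr rfl fun i' hi' => by rw [ha i' (Finset.mem_range.1 hi')]
    have hsb : ∑ j' ∈ Finset.range (n - m), r (b' j')
        = ∑ j' ∈ Finset.range (n - m), r (b j') :=
      Finset.sum_congr rfl fun j' hj' => by rw [hb j' (Finset.mem_range.1 hj')]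
    exact ⟨⟨hg, by rw [hsa, hsb]; exact h2⟩, by rw [ha i hi]; exact h3⟩
  have h := indep_cylinder P LR LS hmLR hmLS hindep m (n - m) (Sum.inr (n - m))
      (fun i' _ => by simp) (fun j' hj' => by simp; omega)
      (fun a b => (gfun r s a b n = m ∧
        (∑ j' ∈ Finset.range (n - m), r (b j')) < ∑ i' ∈ Finset.range m, s (a i')) ∧
          a i = c)
      c hQ
  have hset : {ω | (gfun r s (fun i => LR i ω) (fun j => LS j ω) n = m ∧
        (∑ j' ∈ Finset.range (n - m), r (LS j' ω)) < ∑ i' ∈ Finset.range m, s (LR i' ω)) ∧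
          LR i ω = c} = E2 r s LR LS n m ∩ LR i ⁻¹' {c} := by
    ext ω
    simp only [Set.mem_setOf_eq, Set.mem_inter_iff, E2, Set.mem_preimage, Set.mem_singleton_iff]
  have hset2 : {ω | Sum.elim LR LS (Sum.inr (n - m)) ω = c} = LS (n - m) ⁻¹' {c} := rfl
  rw [hset, hset2] at h
  rw [h, show P (LS (n - m) ⁻¹' {c}) = ENNReal.ofReal (s c) from hdS (n - m) c]

lemma fact4 (hmLR : ∀ i, Measurable (LR i)) (hmLS : ∀ j, Measurable (LS j))
    (hindep : iIndepFun (Sum.elim LR LS) P)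
    (hdR : ∀ i c, P {ω | LR i ω = c} = ENNReal.ofReal (r c))
    (hdS : ∀ j c, P {ω | LS j ω = c} = ENNReal.ofReal (s c))
    (n m : ℕ) (c : ℕ) :
    P (E2 r s LR LS n m ∩ LS (n - m) ⁻¹' {c})
      = P (E2 r s LR LS n m) * ENNReal.ofReal (s c) := by
  have hQ : ∀ a b a' b' : ℕ → ℕ, (∀ i' < m, a' i' = a i') → (∀ j' < n - m, b' j' = b j') →
      (gfun r s a b n = m ∧
        (∑ j' ∈ Finset.range (n - m), r (b j')) < ∑ i' ∈ Finset.range m, s (a i')) →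
      (gfun r s a' b' n = m ∧
        (∑ j' ∈ Finset.range (n - m), r (b' j')) < ∑ i' ∈ Finset.range m, s (a' i')) := by
    rintro a b a' b' ha hb ⟨h1, h2⟩
    have hg : gfun r s a' b' n = m := by
      rw [← h1]
      exact gfun_congr r s (fun i' hi' => ha i' (h1 ▸ hi')) (fun j' hj' => hb j' (h1 ▸ hj'))
    have hsa : ∑ i' ∈ Finset.range m, s (a' i') = ∑ i' ∈ Finset.range m, s (a i') :=
      Finset.sum_congr rfl fun i' hi' => by rw [ha i' (Finset.mem_range.1 hi')]
    have hsb : ∑ j' ∈ Finset.range (n - m), r (b' j')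
        = ∑ j' ∈ Finset.range (n - m), r (b j') :=
      Finset.sum_congr rfl fun j' hj' => by rw [hb j' (Finset.mem_range.1 hj')]
    exact ⟨hg, by rw [hsa, hsb]; exact h2⟩
  have h := indep_cylinder P LR LS hmLR hmLS hindep m (n - m) (Sum.inr (n - m))
      (fun i' _ => by simp) (fun j' hj' => by simp; omega)
      (fun a b => gfun r s a b n = m ∧
        (∑ j' ∈ Finset.range (n - m), r (b j')) < ∑ i' ∈ Finset.range m, s (a i'))
      c hQ
  have hset : {ω | gfun r s (fun i => LR i ω) (fun j => LS j ω) n = m ∧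
        (∑ j' ∈ Finset.range (n - m), r (LS j' ω)) < ∑ i' ∈ Finset.range m, s (LR i' ω)}
      = E2 r s LR LS n m := rfl
  have hset2 : {ω | Sum.elim LR LS (Sum.inr (n - m)) ω = c} = LS (n - m) ⁻¹' {c} := rfl
  rw [hset, hset2] at h
  rw [h, show P (LS (n - m) ⁻¹' {c}) = ENNReal.ofReal (s c) from hdS (n - m) c]

end Facts


section Key

variable {Ω : Type} [MeasurableSpace Ω] (P : Measure Ω) [IsProbabilityMeasure P]
variable (r s : ℕ → ℝ) (LR LS : ℕ → Ω → ℕ)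

lemma measurable_G1 (s : ℕ → ℝ) (LR : ℕ → Ω → ℕ) (hmLR : ∀ i, Measurable (LR i))
    (RG : ℕ → Ω → ℕ) (n : ℕ) (hRG : Measurable (RG n)) (hRGle : ∀ ω, RG n ω ≤ n) :
    Measurable fun ω => ∑ i ∈ Finset.range (RG n ω), s (LR i ω) := by
  have h : (fun ω => ∑ i ∈ Finset.range (RG n ω), s (LR i ω))
      = fun ω => ∑ i ∈ Finset.range n, if i < RG n ω then s (LR i ω) else 0 :=
    funext fun ω => sum_range_eq_sum_ite _ (hRGle ω)
  rw [h]
  refine Finset.measurable_sum _ fun i _ => Measurable.ite ?_ (mcomp (hmLR i) s)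
    measurable_const
  exact hRG measurableSet_Ioi

lemma measurable_G2 (r : ℕ → ℝ) (LS : ℕ → Ω → ℕ) (hmLS : ∀ j, Measurable (LS j))
    (RG : ℕ → Ω → ℕ) (n : ℕ) (hRG : Measurable (RG n)) :
    Measurable fun ω => ∑ j ∈ Finset.range (n - RG n ω), r (LS j ω) := by
  have hRG' : Measurable fun ω => n - RG n ω := Measurable.of_discrete.comp hRG
  have h : (fun ω => ∑ j ∈ Finset.range (n - RG n ω), r (LS j ω))
      = fun ω => ∑ j ∈ Finset.range n, if j < n - RG n ω then r (LS j ω) else 0 :=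
    funext fun ω => sum_range_eq_sum_ite _ (Nat.sub_le n _)
  rw [h]
  refine Finset.measurable_sum _ fun j _ => Measurable.ite ?_ (mcomp (hmLS j) r)
    measurable_const
  exact hRG' measurableSet_Ioi

lemma keyDelta (hmLR : ∀ i, Measurable (LR i)) (hmLS : ∀ j, Measurable (LS j))
    (hindep : iIndepFun (Sum.elim LR LS) P)
    (hdR : ∀ i c, P {ω | LR i ω = c} = ENNReal.ofReal (r c))
    (hdS : ∀ j c, P {ω | LS j ω = c} = ENNReal.ofReal (s c))
    (hr : ∀ c, 0 ≤ r c) (hs : ∀ c, 0 ≤ s c)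
    (RG : ℕ → Ω → ℕ) (n : ℕ) (hRG : Measurable (RG n))
    (hgf : ∀ ω, RG n ω = gfun r s (fun i => LR i ω) (fun j => LS j ω) n)
    (hRGle : ∀ ω, RG n ω ≤ n) :
    ∫⁻ ω, (if (∑ i ∈ Finset.range (RG n ω), s (LR i ω))
            ≤ ∑ j ∈ Finset.range (n - RG n ω), r (LS j ω)
        then ∑ j ∈ Finset.range (n - RG n ω),
            (if LR (RG n ω) ω = LS j ω then (1 : ℝ≥0∞) else 0)
        else ∑ i ∈ Finset.range (RG n ω),
            (if LR i ω = LS (n - RG n ω) ω then (1 : ℝ≥0∞) else 0)) ∂P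
      = ∫⁻ ω, ENNReal.ofReal (max (∑ i ∈ Finset.range (RG n ω), s (LR i ω))
            (∑ j ∈ Finset.range (n - RG n ω), r (LS j ω))) ∂P := by
  classical
  set F1 : ℕ → Ω → ℝ≥0∞ := fun m ω => ∑ j ∈ Finset.range (n - m),
    (if LR m ω = LS j ω then 1 else 0) with hF1
  set F2 : ℕ → Ω → ℝ≥0∞ := fun m ω => ∑ i ∈ Finset.range m,
    (if LR i ω = LS (n - m) ω then 1 else 0) with hF2
  set W1 : ℕ → Ω → ℝ≥0∞ := fun m ω =>
    ENNReal.ofReal (∑ j ∈ Finset.range (n - m), r (LS j ω)) with hW1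
  set W2 : ℕ → Ω → ℝ≥0∞ := fun m ω =>
    ENNReal.ofReal (∑ i ∈ Finset.range m, s (LR i ω)) with hW2
  have hmE1 : ∀ m, MeasurableSet (E1 r s LR LS n m) := fun m =>
    E1_meas r s LR LS hmLR hmLS RG n m hRG hgf
  have hmE2 : ∀ m, MeasurableSet (E2 r s LR LS n m) := fun m =>
    E2_meas r s LR LS hmLR hmLS RG n m hRG hgf
  have hmF1 : ∀ m, Measurable (F1 m) := fun m =>
    Finset.measurable_sum _ fun j _ =>
      Measurable.ite (meas_eq (hmLR m) (hmLS j)) measurable_const measurable_const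
  have hmF2 : ∀ m, Measurable (F2 m) := fun m =>
    Finset.measurable_sum _ fun i _ =>
      Measurable.ite (meas_eq (hmLR i) (hmLS (n - m))) measurable_const measurable_const
  have hmW1 : ∀ m, Measurable (W1 m) := fun m =>
    (measurable_sumR r LS hmLS (n - m)).ennreal_ofReal
  have hmW2 : ∀ m, Measurable (W2 m) := fun m =>
    (measurable_sumS s LR hmLR m).ennreal_ofReal
  have hdecL : ∀ ω, (if (∑ i ∈ Finset.range (RG n ω), s (LR i ω))
            ≤ ∑ j ∈ Finset.range (n - RG n ω), r (LS j ω)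
        then ∑ j ∈ Finset.range (n - RG n ω),
            (if LR (RG n ω) ω = LS j ω then (1 : ℝ≥0∞) else 0)
        else ∑ i ∈ Finset.range (RG n ω),
            (if LR i ω = LS (n - RG n ω) ω then (1 : ℝ≥0∞) else 0))
      = ∑ m ∈ Finset.range (n + 1),
          (Set.indicator (E1 r s LR LS n m) (F1 m) ω
            + Set.indicator (E2 r s LR LS n m) (F2 m) ω) := by
    intro ω
    have hm0 : RG n ω ∈ Finset.range (n + 1) := Finset.mem_range.2 (Nat.lt_succ_of_le (hRGle ω))
    rw [Finset.sum_eq_single_of_mem (RG n ω) hm0 ?_]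
    · by_cases h : (∑ i ∈ Finset.range (RG n ω), s (LR i ω))
          ≤ ∑ j ∈ Finset.range (n - RG n ω), r (LS j ω)
      · rw [if_pos h, Set.indicator_of_mem (show ω ∈ E1 r s LR LS n (RG n ω) from
          ⟨(hgf ω).symm, h⟩), Set.indicator_of_notMem
          (show ω ∉ E2 r s LR LS n (RG n ω) from fun hc => absurd hc.2 (not_lt.2 h)), add_zero]
      · rw [if_neg h, Set.indicator_of_notMem (show ω ∉ E1 r s LR LS n (RG n ω) from
          fun hc => absurd hc.2 h), Set.indicator_of_mem
          (show ω ∈ E2 r s LR LS n (RG n ω) from ⟨(hgf ω).symm, not_le.1 h⟩), zero_add]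
    · intro m _ hne
      rw [Set.indicator_of_notMem (show ω ∉ E1 r s LR LS n m from
          fun hc => hne (by rw [← hc.1]; exact (hgf ω).symm)),
        Set.indicator_of_notMem (show ω ∉ E2 r s LR LS n m from
          fun hc => hne (by rw [← hc.1]; exact (hgf ω).symm)), add_zero]
  have hdecR : ∀ ω, ENNReal.ofReal (max (∑ i ∈ Finset.range (RG n ω), s (LR i ω))
            (∑ j ∈ Finset.range (n - RG n ω), r (LS j ω)))
      = ∑ m ∈ Finset.range (n + 1),
          (Set.indicator (E1 r s LR LS n m) (W1 m) ω
            + Set.indicator (E2 r s LR LS n m) (W2 m) ω) := by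
    intro ω
    have hm0 : RG n ω ∈ Finset.range (n + 1) := Finset.mem_range.2 (Nat.lt_succ_of_le (hRGle ω))
    rw [Finset.sum_eq_single_of_mem (RG n ω) hm0 ?_]
    · by_cases h : (∑ i ∈ Finset.range (RG n ω), s (LR i ω))
          ≤ ∑ j ∈ Finset.range (n - RG n ω), r (LS j ω)
      · rw [max_eq_right h, Set.indicator_of_mem (show ω ∈ E1 r s LR LS n (RG n ω) from
          ⟨(hgf ω).symm, h⟩), Set.indicator_of_notMem
          (show ω ∉ E2 r s LR LS n (RG n ω) from fun hc => absurd hc.2 (not_lt.2 h)), add_zero]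
      · rw [max_eq_left (le_of_lt (not_le.1 h)), Set.indicator_of_notMem
          (show ω ∉ E1 r s LR LS n (RG n ω) from fun hc => absurd hc.2 h),
          Set.indicator_of_mem
          (show ω ∈ E2 r s LR LS n (RG n ω) from ⟨(hgf ω).symm, not_le.1 h⟩), zero_add]
    · intro m _ hne
      rw [Set.indicator_of_notMem (show ω ∉ E1 r s LR LS n m from
          fun hc => hne (by rw [← hc.1]; exact (hgf ω).symm)),
        Set.indicator_of_notMem (show ω ∉ E2 r s LR LS n m from
          fun hc => hne (by rw [← hc.1]; exact (hgf ω).symm)), add_zero]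
  have hterm1 : ∀ m, ∫⁻ ω, Set.indicator (E1 r s LR LS n m) (F1 m) ω ∂P
      = ∫⁻ ω, Set.indicator (E1 r s LR LS n m) (W1 m) ω ∂P := by
    intro m
    rw [lintegral_indicator (hmE1 m), lintegral_indicator (hmE1 m)]
    calc ∫⁻ ω in E1 r s LR LS n m, F1 m ω ∂P
        = ∑ j ∈ Finset.range (n - m), ∫⁻ ω in E1 r s LR LS n m,
            (if LR m ω = LS j ω then (1 : ℝ≥0∞) else 0) ∂P := by
          exact lintegral_finset_sum _ fun j _ =>
            Measurable.ite (meas_eq (hmLR m) (hmLS j)) measurable_const measurable_const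
      _ = ∑ j ∈ Finset.range (n - m), ∫⁻ ω in E1 r s LR LS n m,
            ENNReal.ofReal (r (LS j ω)) ∂P := by
          refine Finset.sum_congr rfl fun j hj => ?_
          exact lintegral_match P (hmLR m) (hmLS j) (hmE1 m) r
            (fun c => fact1 P r s LR LS hmLR hmLS hindep hdR hdS n m j (Finset.mem_range.1 hj) c)
      _ = ∫⁻ ω in E1 r s LR LS n m, ∑ j ∈ Finset.range (n - m),
            ENNReal.ofReal (r (LS j ω)) ∂P := by
          exact (lintegral_finset_sum _ fun j _ => (mcomp (hmLS j) r).ennreal_ofReal).symm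
      _ = ∫⁻ ω in E1 r s LR LS n m, W1 m ω ∂P := by
          refine lintegral_congr fun ω => ?_
          rw [hW1]
          exact (ENNReal.ofReal_sum_of_nonneg fun j _ => hr (LS j ω)).symm
  have hterm2 : ∀ m, ∫⁻ ω, Set.indicator (E2 r s LR LS n m) (F2 m) ω ∂P
      = ∫⁻ ω, Set.indicator (E2 r s LR LS n m) (W2 m) ω ∂P := by
    intro m
    rw [lintegral_indicator (hmE2 m), lintegral_indicator (hmE2 m)]
    calc ∫⁻ ω in E2 r s LR LS n m, F2 m ω ∂P
        = ∑ i ∈ Finset.range m, ∫⁻ ω in E2 r s LR LS n m,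
            (if LR i ω = LS (n - m) ω then (1 : ℝ≥0∞) else 0) ∂P := by
          exact lintegral_finset_sum _ fun i _ =>
            Measurable.ite (meas_eq (hmLR i) (hmLS (n - m))) measurable_const measurable_const
      _ = ∑ i ∈ Finset.range m, ∫⁻ ω in E2 r s LR LS n m,
            ENNReal.ofReal (s (LR i ω)) ∂P := by
          refine Finset.sum_congr rfl fun i hi => ?_
          have := lintegral_match P (hmLS (n - m)) (hmLR i) (hmE2 m) s
            (fun c => fact3 P r s LR LS hmLR hmLS hindep hdR hdS n m i (Finset.mem_range.1 hi) c)
          refine Eq.trans ?_ this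
          refine lintegral_congr fun ω => ?_
          by_cases h : LR i ω = LS (n - m) ω
          · rw [if_pos h, if_pos h.symm]
          · rw [if_neg h, if_neg (fun hc => h hc.symm)]
      _ = ∫⁻ ω in E2 r s LR LS n m, ∑ i ∈ Finset.range m,
            ENNReal.ofReal (s (LR i ω)) ∂P := by
          exact (lintegral_finset_sum _ fun i _ => (mcomp (hmLR i) s).ennreal_ofReal).symm
      _ = ∫⁻ ω in E2 r s LR LS n m, W2 m ω ∂P := by
          refine lintegral_congr fun ω => ?_
          rw [hW2]
          exact (ENNReal.ofReal_sum_of_nonneg fun i _ => hs (LR i ω)).symm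
  calc ∫⁻ ω, (if (∑ i ∈ Finset.range (RG n ω), s (LR i ω))
            ≤ ∑ j ∈ Finset.range (n - RG n ω), r (LS j ω)
        then ∑ j ∈ Finset.range (n - RG n ω),
            (if LR (RG n ω) ω = LS j ω then (1 : ℝ≥0∞) else 0)
        else ∑ i ∈ Finset.range (RG n ω),
            (if LR i ω = LS (n - RG n ω) ω then (1 : ℝ≥0∞) else 0)) ∂P
      = ∫⁻ ω, ∑ m ∈ Finset.range (n + 1),
          (Set.indicator (E1 r s LR LS n m) (F1 m) ω
            + Set.indicator (E2 r s LR LS n m) (F2 m) ω) ∂P := lintegral_congr hdecL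
    _ = ∑ m ∈ Finset.range (n + 1), ∫⁻ ω,
          (Set.indicator (E1 r s LR LS n m) (F1 m) ω
            + Set.indicator (E2 r s LR LS n m) (F2 m) ω) ∂P :=
        lintegral_finset_sum _ fun m _ =>
          (((hmF1 m).indicator (hmE1 m)).add ((hmF2 m).indicator (hmE2 m)))
    _ = ∑ m ∈ Finset.range (n + 1), (∫⁻ ω, Set.indicator (E1 r s LR LS n m) (F1 m) ω ∂P
          + ∫⁻ ω, Set.indicator (E2 r s LR LS n m) (F2 m) ω ∂P) :=
        Finset.sum_congr rfl fun m _ =>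
          lintegral_add_left ((hmF1 m).indicator (hmE1 m)) _
    _ = ∑ m ∈ Finset.range (n + 1), (∫⁻ ω, Set.indicator (E1 r s LR LS n m) (W1 m) ω ∂P
          + ∫⁻ ω, Set.indicator (E2 r s LR LS n m) (W2 m) ω ∂P) :=
        Finset.sum_congr rfl fun m _ => by rw [hterm1 m, hterm2 m]
    _ = ∑ m ∈ Finset.range (n + 1), ∫⁻ ω,
          (Set.indicator (E1 r s LR LS n m) (W1 m) ω
            + Set.indicator (E2 r s LR LS n m) (W2 m) ω) ∂P :=
        Finset.sum_congr rfl fun m _ =>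
          (lintegral_add_left ((hmW1 m).indicator (hmE1 m)) _).symm
    _ = ∫⁻ ω, ∑ m ∈ Finset.range (n + 1),
          (Set.indicator (E1 r s LR LS n m) (W1 m) ω
            + Set.indicator (E2 r s LR LS n m) (W2 m) ω) ∂P :=
        (lintegral_finset_sum _ fun m _ =>
          (((hmW1 m).indicator (hmE1 m)).add ((hmW2 m).indicator (hmE2 m)))).symm
    _ = ∫⁻ ω, ENNReal.ofReal (max (∑ i ∈ Finset.range (RG n ω), s (LR i ω))
            (∑ j ∈ Finset.range (n - RG n ω), r (LS j ω))) ∂P :=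
        (lintegral_congr hdecR).symm


lemma keySum (hmLR : ∀ i, Measurable (LR i)) (hmLS : ∀ j, Measurable (LS j))
    (hindep : iIndepFun (Sum.elim LR LS) P)
    (hdR : ∀ i c, P {ω | LR i ω = c} = ENNReal.ofReal (r c))
    (hdS : ∀ j c, P {ω | LS j ω = c} = ENNReal.ofReal (s c))
    (hr : ∀ c, 0 ≤ r c) (hs : ∀ c, 0 ≤ s c)
    (μ : ℝ) (hμo : ENNReal.ofReal μ = ∑' c, ENNReal.ofReal (s c) * ENNReal.ofReal (r c))
    (RG : ℕ → Ω → ℕ) (hRG : ∀ n, Measurable (RG n)) (hRG0 : ∀ ω, RG 0 ω = 0)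
    (hgf : ∀ n ω, RG n ω = gfun r s (fun i => LR i ω) (fun j => LS j ω) n)
    (hRGle : ∀ n ω, RG n ω ≤ n)
    (hg1 : ∀ n ω, (∑ i ∈ Finset.range (RG n ω), s (LR i ω))
        < ∑ j ∈ Finset.range (n - RG n ω), r (LS j ω) → RG (n + 1) ω = RG n ω + 1)
    (hg0 : ∀ n ω, (∑ j ∈ Finset.range (n - RG n ω), r (LS j ω))
        < ∑ i ∈ Finset.range (RG n ω), s (LR i ω) → RG (n + 1) ω = RG n ω)
    (hgeq : ∀ n ω, (∑ j ∈ Finset.range (n - RG n ω), r (LS j ω))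
        = ∑ i ∈ Finset.range (RG n ω), s (LR i ω) → RG (n + 1) ω = RG n ω + 1) :
    ∀ n : ℕ, ∫⁻ ω, ENNReal.ofReal ((∑ i ∈ Finset.range (RG n ω), s (LR i ω))
        + ∑ j ∈ Finset.range (n - RG n ω), r (LS j ω)) ∂P
      = n * ENNReal.ofReal μ := by
  intro n
  induction n with
  | zero =>
    have h0 : ∀ ω : Ω, ENNReal.ofReal ((∑ i ∈ Finset.range (RG 0 ω), s (LR i ω))
        + ∑ j ∈ Finset.range (0 - RG 0 ω), r (LS j ω)) = 0 := by
      intro ω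
      rw [hRG0 ω]
      simp
    rw [lintegral_congr h0]
    simp
  | succ n ih =>
    classical
    set U1 : ℕ → Ω → ℝ≥0∞ := fun m ω => ENNReal.ofReal (s (LR m ω)) with hU1
    set U2 : ℕ → Ω → ℝ≥0∞ := fun m ω => ENNReal.ofReal (r (LS (n - m) ω)) with hU2
    have hmE1 : ∀ m, MeasurableSet (E1 r s LR LS n m) := fun m =>
      E1_meas r s LR LS hmLR hmLS RG n m (hRG n) (hgf n)
    have hmE2 : ∀ m, MeasurableSet (E2 r s LR LS n m) := fun m =>
      E2_meas r s LR LS hmLR hmLS RG n m (hRG n) (hgf n)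
    have hmU1 : ∀ m, Measurable (U1 m) := fun m => (mcomp (hmLR m) s).ennreal_ofReal
    have hmU2 : ∀ m, Measurable (U2 m) := fun m => (mcomp (hmLS (n - m)) r).ennreal_ofReal
    -- pointwise step identity
    have hpt : ∀ ω, ENNReal.ofReal ((∑ i ∈ Finset.range (RG (n+1) ω), s (LR i ω))
          + ∑ j ∈ Finset.range ((n+1) - RG (n+1) ω), r (LS j ω))
        = ENNReal.ofReal ((∑ i ∈ Finset.range (RG n ω), s (LR i ω))
            + ∑ j ∈ Finset.range (n - RG n ω), r (LS j ω))
          + ∑ m ∈ Finset.range (n + 1),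
              (Set.indicator (E1 r s LR LS n m) (U1 m) ω
                + Set.indicator (E2 r s LR LS n m) (U2 m) ω) := by
      intro ω
      have hm0 : RG n ω ∈ Finset.range (n + 1) :=
        Finset.mem_range.2 (Nat.lt_succ_of_le (hRGle n ω))
      rw [Finset.sum_eq_single_of_mem (RG n ω) hm0 ?_]
      · by_cases h : (∑ i ∈ Finset.range (RG n ω), s (LR i ω))
            ≤ ∑ j ∈ Finset.range (n - RG n ω), r (LS j ω)
        · have hRstep : RG (n+1) ω = RG n ω + 1 := by
            rcases lt_or_eq_of_le h with h' | h'
            · exact hg1 n ω h'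
            · exact hgeq n ω h'.symm
          rw [Set.indicator_of_mem (show ω ∈ E1 r s LR LS n (RG n ω) from
              ⟨(hgf n ω).symm, h⟩),
            Set.indicator_of_notMem (show ω ∉ E2 r s LR LS n (RG n ω) from
              fun hc => absurd hc.2 (not_lt.2 h)), add_zero]
          have e1 : ∑ i ∈ Finset.range (RG (n+1) ω), s (LR i ω)
              = (∑ i ∈ Finset.range (RG n ω), s (LR i ω)) + s (LR (RG n ω) ω) := by
            rw [hRstep, Finset.sum_range_succ]
          have e2 : (n+1) - RG (n+1) ω = n - RG n ω := by rw [hRstep]; omega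
          rw [e1, e2, add_right_comm, ENNReal.ofReal_add
            (add_nonneg (Finset.sum_nonneg fun i _ => hs (LR i ω))
              (Finset.sum_nonneg fun j _ => hr (LS j ω))) (hs (LR (RG n ω) ω))]
        · have hRstep : RG (n+1) ω = RG n ω := hg0 n ω (not_le.1 h)
          rw [Set.indicator_of_notMem (show ω ∉ E1 r s LR LS n (RG n ω) from
              fun hc => absurd hc.2 h),
            Set.indicator_of_mem (show ω ∈ E2 r s LR LS n (RG n ω) from
              ⟨(hgf n ω).symm, not_le.1 h⟩), zero_add]
          have e2 : (n+1) - RG (n+1) ω = (n - RG n ω) + 1 := by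
            rw [hRstep]
            have := hRGle n ω
            omega
          have e1 : ∑ j ∈ Finset.range ((n+1) - RG (n+1) ω), r (LS j ω)
              = (∑ j ∈ Finset.range (n - RG n ω), r (LS j ω)) + r (LS (n - RG n ω) ω) := by
            rw [e2, Finset.sum_range_succ]
          rw [e1, hRstep, ← add_assoc, ENNReal.ofReal_add
            (add_nonneg (Finset.sum_nonneg fun i _ => hs (LR i ω))
              (Finset.sum_nonneg fun j _ => hr (LS j ω))) (hr (LS (n - RG n ω) ω))]
      · intro m _ hne
        rw [Set.indicator_of_notMem (show ω ∉ E1 r s LR LS n m from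
            fun hc => hne (by rw [← hc.1]; exact (hgf n ω).symm)),
          Set.indicator_of_notMem (show ω ∉ E2 r s LR LS n m from
            fun hc => hne (by rw [← hc.1]; exact (hgf n ω).symm)), add_zero]
    rw [lintegral_congr hpt]
    rw [lintegral_add_left (f := fun ω => ENNReal.ofReal ((∑ i ∈ Finset.range (RG n ω), s (LR i ω))
          + ∑ j ∈ Finset.range (n - RG n ω), r (LS j ω)))
      (((measurable_G1 s LR hmLR RG n (hRG n) (hRGle n)).add
      (measurable_G2 r LS hmLS RG n (hRG n))).ennreal_ofReal)]
    rw [ih]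
    have hδ : ∫⁻ ω, (∑ m ∈ Finset.range (n + 1),
        (Set.indicator (E1 r s LR LS n m) (U1 m) ω
          + Set.indicator (E2 r s LR LS n m) (U2 m) ω)) ∂P = ENNReal.ofReal μ := by
      rw [lintegral_finset_sum _ (f := fun m ω => Set.indicator (E1 r s LR LS n m) (U1 m) ω
            + Set.indicator (E2 r s LR LS n m) (U2 m) ω) (fun m _ =>
        ((hmU1 m).indicator (hmE1 m)).add ((hmU2 m).indicator (hmE2 m)))]
      have hterm : ∀ m, ∫⁻ ω, (Set.indicator (E1 r s LR LS n m) (U1 m) ω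
            + Set.indicator (E2 r s LR LS n m) (U2 m) ω) ∂P
          = ENNReal.ofReal μ * (P (E1 r s LR LS n m) + P (E2 r s LR LS n m)) := by
        intro m
        rw [lintegral_add_left ((hmU1 m).indicator (hmE1 m))]
        rw [lintegral_indicator (hmE1 m), lintegral_indicator (hmE2 m)]
        have h1 : ∫⁻ ω in E1 r s LR LS n m, U1 m ω ∂P
            = ENNReal.ofReal μ * P (E1 r s LR LS n m) := by
          rw [hU1]
          rw [lintegral_weight P (hmLR m) (hmE1 m) (fun c => ENNReal.ofReal (s c))
            (fun c => ENNReal.ofReal (r c))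
            (fun c => fact2 P r s LR LS hmLR hmLS hindep hdR hdS n m c), ← hμo]
        have h2 : ∫⁻ ω in E2 r s LR LS n m, U2 m ω ∂P
            = ENNReal.ofReal μ * P (E2 r s LR LS n m) := by
          rw [hU2]
          rw [lintegral_weight P (hmLS (n - m)) (hmE2 m) (fun c => ENNReal.ofReal (r c))
            (fun c => ENNReal.ofReal (s c))
            (fun c => fact4 P r s LR LS hmLR hmLS hindep hdR hdS n m c)]
          congr 1
          rw [hμo]
          exact tsum_congr fun c => mul_comm _ _
        rw [h1, h2, mul_add]
      rw [Finset.sum_congr rfl fun m _ => hterm m, ← Finset.mul_sum]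
      have hpart : ∑ m ∈ Finset.range (n + 1),
          (P (E1 r s LR LS n m) + P (E2 r s LR LS n m)) = 1 := by
        have hms : ∀ m, P (E1 r s LR LS n m) + P (E2 r s LR LS n m)
            = P (RG n ⁻¹' {m}) := by
          intro m
          rw [← measure_union ?_ (hmE2 m)]
          · congr 1
            ext ω
            simp only [Set.mem_union, Set.mem_preimage, Set.mem_singleton_iff, E1, E2,
              Set.mem_setOf_eq, hgf n ω]
            constructor
            · rintro (⟨h1, _⟩ | ⟨h1, _⟩) <;> exact h1
            · intro h1
              rcases le_or_gt (∑ i ∈ Finset.range m, s (LR i ω))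
                (∑ j ∈ Finset.range (n - m), r (LS j ω)) with h2 | h2
              · exact Or.inl ⟨h1, h2⟩
              · exact Or.inr ⟨h1, h2⟩
          · rw [Set.disjoint_left]
            rintro ω ⟨_, h1⟩ ⟨_, h2⟩
            exact absurd h2 (not_lt.2 h1)
        rw [Finset.sum_congr rfl fun m _ => hms m]
        rw [← measure_biUnion_finset ?_ fun m _ => hRG n (measurableSet_singleton m)]
        · have huniv : (⋃ m ∈ Finset.range (n + 1), RG n ⁻¹' {m}) = Set.univ := by
            ext ω
            simp only [Set.mem_iUnion, Set.mem_preimage, Set.mem_singleton_iff,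
              Finset.mem_range, Set.mem_univ, iff_true]
            exact ⟨RG n ω, Nat.lt_succ_of_le (hRGle n ω), rfl⟩
          rw [huniv, measure_univ]
        · intro a _ b _ hab
          rw [Function.onFun, Set.disjoint_left]
          rintro ω h1 h2
          simp only [Set.mem_preimage, Set.mem_singleton_iff] at h1 h2
          exact hab (by rw [← h1, ← h2])
      rw [hpart, mul_one]
    rw [hδ]
    push_cast
    ring

end Key


end GreedyAux5

open GreedyAux5

/-- Exact formula for the expected greedy match count:
`E M_G(n) = (1/2) ∑_{k=1}^{n-1} E|Γ_R[R_G(k)] - Γ_S[S_G(k)]| + n(n-1)μ/4`. -/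
theorem greedy_expected_matches_formula
    {Ω : Type} [MeasurableSpace Ω] (P : Measure Ω) [IsProbabilityMeasure P]
    (LR LS : ℕ → Ω → ℕ) (r s : ℕ → ℝ) (μ vR vS : ℝ)
    (hmLR : ∀ i, Measurable (LR i)) (hmLS : ∀ i, Measurable (LS i))
    (hr : ∀ j, 0 ≤ r j) (hs : ∀ j, 0 ≤ s j)
    (hdR : ∀ i j, P {ω | LR i ω = j} = ENNReal.ofReal (r j))
    (hdS : ∀ i j, P {ω | LS i ω = j} = ENNReal.ofReal (s j))
    (hindep : ProbabilityTheory.iIndepFun (Sum.elim LR LS) P)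
    (hμ : μ = ∑' j, r j * s j) (hμpos : 0 < μ)
    (hvR : ProbabilityTheory.variance (fun ω => s (LR 0 ω)) P = vR)
    (hvS : ProbabilityTheory.variance (fun ω => r (LS 0 ω)) P = vS)
    (hv : 0 < vR + vS)
    (RG : ℕ → Ω → ℕ) (hRGmeas : ∀ n, Measurable (RG n)) (hRG0 : ∀ ω, RG 0 ω = 0)
    (hstep : ∀ n ω, RG (n + 1) ω = RG n ω ∨ RG (n + 1) ω = RG n ω + 1)
    (hg1 : ∀ n ω, (∑ i ∈ Finset.range (RG n ω), s (LR i ω))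
        < ∑ j ∈ Finset.range (n - RG n ω), r (LS j ω) → RG (n + 1) ω = RG n ω + 1)
    (hg0 : ∀ n ω, (∑ j ∈ Finset.range (n - RG n ω), r (LS j ω))
        < ∑ i ∈ Finset.range (RG n ω), s (LR i ω) → RG (n + 1) ω = RG n ω)
    (hgeq : ∀ n ω, (∑ j ∈ Finset.range (n - RG n ω), r (LS j ω))
        = ∑ i ∈ Finset.range (RG n ω), s (LR i ω) → RG (n + 1) ω = RG n ω + 1)
    (MG : ℕ → Ω → ℝ)
    (hMG : ∀ n ω, MG n ω = ∑ i ∈ Finset.range (RG n ω), ∑ j ∈ Finset.range (n - RG n ω),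
        if LR i ω = LS j ω then (1 : ℝ) else 0) :
    ∀ n : ℕ,
      ∫ ω, MG n ω ∂P
        = (1 / 2) * ∑ k ∈ Finset.Ico 1 n,
            ∫ ω, |(∑ i ∈ Finset.range (RG k ω), s (LR i ω))
                - ∑ j ∈ Finset.range (k - RG k ω), r (LS j ω)| ∂P
          + (n : ℝ) * ((n : ℝ) - 1) * μ / 4 := by
  classical
  -- basic bounds
  have hr1 : ∀ c, r c ≤ 1 := fun c => by
    have h1 : ENNReal.ofReal (r c) ≤ 1 := (hdR 0 c) ▸ prob_le_one
    exact ENNReal.ofReal_le_one.1 h1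
  have hs1 : ∀ c, s c ≤ 1 := fun c => by
    have h1 : ENNReal.ofReal (s c) ≤ 1 := (hdS 0 c) ▸ prob_le_one
    exact ENNReal.ofReal_le_one.1 h1
  -- summability and the μ identity
  have hsum1 : ∑' c, ENNReal.ofReal (r c) = 1 := by
    have hdisj : Pairwise (Function.onFun Disjoint fun c => LR 0 ⁻¹' {c}) := by
      intro a b hab
      rw [Function.onFun, Set.disjoint_left]
      rintro ω h1 h2
      simp only [Set.mem_preimage, Set.mem_singleton_iff] at h1 h2
      exact hab (by rw [← h1, ← h2])
    calc ∑' c, ENNReal.ofReal (r c) = ∑' c, P (LR 0 ⁻¹' {c}) :=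
          tsum_congr fun c => (hdR 0 c).symm
      _ = P (⋃ c, LR 0 ⁻¹' {c}) :=
          (measure_iUnion hdisj fun c => hmLR 0 (measurableSet_singleton c)).symm
      _ = 1 := by
          have : (⋃ c, LR 0 ⁻¹' {c}) = Set.univ := by
            ext ω
            simp only [Set.mem_iUnion, Set.mem_preimage, Set.mem_singleton_iff,
              Set.mem_univ, iff_true]
            exact ⟨LR 0 ω, rfl⟩
          rw [this, measure_univ]
  have hsummr : Summable r := by
    have h1 : Summable fun c => (ENNReal.ofReal (r c)).toReal :=
      ENNReal.summable_toReal (by rw [hsum1]; exact ENNReal.one_ne_top)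
    have h2 : (fun c => (ENNReal.ofReal (r c)).toReal) = r :=
      funext fun c => ENNReal.toReal_ofReal (hr c)
    rwa [h2] at h1
  have hsumrs : Summable fun c => r c * s c :=
    Summable.of_nonneg_of_le (fun c => mul_nonneg (hr c) (hs c))
      (fun c => mul_le_of_le_one_right (hr c) (hs1 c)) hsummr
  have hμo : ENNReal.ofReal μ = ∑' c, ENNReal.ofReal (s c) * ENNReal.ofReal (r c) := by
    rw [hμ, ENNReal.ofReal_tsum_of_nonneg (fun c => mul_nonneg (hr c) (hs c)) hsumrs]
    exact tsum_congr fun c => by rw [ENNReal.ofReal_mul (hr c), mul_comm]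
  -- RG facts
  have hRGle : ∀ n ω, RG n ω ≤ n := by
    intro n ω
    induction n with
    | zero => rw [hRG0]
    | succ n ih => rcases hstep n ω with h | h <;> omega
  have hgf : ∀ n ω, RG n ω = gfun r s (fun i => LR i ω) (fun j => LS j ω) n := by
    intro n ω
    induction n with
    | zero => rw [hRG0, gfun_zero]
    | succ n ih =>
      rw [gfun_succ, ← ih]
      rcases lt_trichotomy (∑ j ∈ Finset.range (n - RG n ω), r (LS j ω))
        (∑ i ∈ Finset.range (RG n ω), s (LR i ω)) with h | h | h
      · rw [hg0 n ω h, if_pos h]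
      · rw [hgeq n ω h, if_neg (by rw [h]; exact lt_irrefl _)]
      · rw [hg1 n ω h, if_neg (not_lt.2 (le_of_lt h))]
  -- MG facts
  have hMGnonneg : ∀ n ω, 0 ≤ MG n ω := by
    intro n ω
    rw [hMG]
    refine Finset.sum_nonneg fun i _ => Finset.sum_nonneg fun j _ => ?_
    split <;> norm_num
  have hMGmeas : ∀ n, Measurable (MG n) := by
    intro n
    have h : MG n = fun ω => ∑ i ∈ Finset.range n,
        if i < RG n ω then (∑ j ∈ Finset.range n,
          if j < n - RG n ω then (if LR i ω = LS j ω then (1:ℝ) else 0) else 0) else 0 := by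
      funext ω
      rw [hMG n ω, sum_range_eq_sum_ite _ (hRGle n ω)]
      refine Finset.sum_congr rfl fun i _ => ?_
      split_ifs with h1
      · exact sum_range_eq_sum_ite _ (Nat.sub_le n _)
      · rfl
    rw [h]
    refine Finset.measurable_sum _ fun i _ => Measurable.ite ?_ ?_ measurable_const
    · exact hRGmeas n measurableSet_Ioi
    · refine Finset.measurable_sum _ fun j _ => Measurable.ite ?_ ?_ measurable_const
      · exact (Measurable.of_discrete.comp (hRGmeas n)
          : Measurable fun ω => n - RG n ω) measurableSet_Ioi
      · exact Measurable.ite (meas_eq (hmLR i) (hmLS j)) measurable_const measurable_const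
  -- one-step identity for ofReal ∘ MG
  have hstepE : ∀ n ω, ENNReal.ofReal (MG (n + 1) ω)
      = ENNReal.ofReal (MG n ω)
        + (if (∑ i ∈ Finset.range (RG n ω), s (LR i ω))
              ≤ ∑ j ∈ Finset.range (n - RG n ω), r (LS j ω)
          then ∑ j ∈ Finset.range (n - RG n ω),
              (if LR (RG n ω) ω = LS j ω then (1 : ℝ≥0∞) else 0)
          else ∑ i ∈ Finset.range (RG n ω),
              (if LR i ω = LS (n - RG n ω) ω then (1 : ℝ≥0∞) else 0)) := by
    intro n ω
    have hofReal_ite : ∀ (p : Prop) [Decidable p],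
        ENNReal.ofReal (if p then (1:ℝ) else 0) = (if p then (1:ℝ≥0∞) else 0) := by
      intro p _
      split <;> simp
    by_cases h : (∑ i ∈ Finset.range (RG n ω), s (LR i ω))
        ≤ ∑ j ∈ Finset.range (n - RG n ω), r (LS j ω)
    · have hRstep : RG (n+1) ω = RG n ω + 1 := by
        rcases lt_or_eq_of_le h with h' | h'
        · exact hg1 n ω h'
        · exact hgeq n ω h'.symm
      have e2 : (n+1) - RG (n+1) ω = n - RG n ω := by rw [hRstep]; omega
      have hreal : MG (n+1) ω = MG n ω + ∑ j ∈ Finset.range (n - RG n ω),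
          (if LR (RG n ω) ω = LS j ω then (1:ℝ) else 0) := by
        rw [hMG (n+1) ω, e2, hRstep, Finset.sum_range_succ, ← hMG n ω]
      rw [hreal, if_pos h, ENNReal.ofReal_add (hMGnonneg n ω)
        (Finset.sum_nonneg fun j _ => by split <;> norm_num)]
      congr 1
      rw [ENNReal.ofReal_sum_of_nonneg fun j _ => by split <;> norm_num]
      exact Finset.sum_congr rfl fun j _ => hofReal_ite _
    · have hRstep : RG (n+1) ω = RG n ω := hg0 n ω (not_le.1 h)
      have e2 : (n+1) - RG (n+1) ω = (n - RG n ω) + 1 := by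
        rw [hRstep]
        have := hRGle n ω
        omega
      have hreal : MG (n+1) ω = MG n ω + ∑ i ∈ Finset.range (RG n ω),
          (if LR i ω = LS (n - RG n ω) ω then (1:ℝ) else 0) := by
        rw [hMG (n+1) ω, e2, hRstep]
        have hinner : ∀ i, ∑ j ∈ Finset.range ((n - RG n ω) + 1),
            (if LR i ω = LS j ω then (1:ℝ) else 0)
            = (∑ j ∈ Finset.range (n - RG n ω), (if LR i ω = LS j ω then (1:ℝ) else 0))
              + (if LR i ω = LS (n - RG n ω) ω then (1:ℝ) else 0) :=
          fun i => Finset.sum_range_succ _ _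
        rw [Finset.sum_congr rfl fun i _ => hinner i, Finset.sum_add_distrib, ← hMG n ω]
      rw [hreal, if_neg h, ENNReal.ofReal_add (hMGnonneg n ω)
        (Finset.sum_nonneg fun i _ => by split <;> norm_num)]
      congr 1
      rw [ENNReal.ofReal_sum_of_nonneg fun i _ => by split <;> norm_num]
      exact Finset.sum_congr rfl fun i _ => hofReal_ite _
  -- the D quantities
  set D : ℕ → ℝ≥0∞ := fun k => ∫⁻ ω, ENNReal.ofReal
    |(∑ i ∈ Finset.range (RG k ω), s (LR i ω))
      - ∑ j ∈ Finset.range (k - RG k ω), r (LS j ω)| ∂P with hDdef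
  have hmabs : ∀ k, Measurable fun ω =>
      |(∑ i ∈ Finset.range (RG k ω), s (LR i ω))
        - ∑ j ∈ Finset.range (k - RG k ω), r (LS j ω)| := fun k =>
    ((measurable_G1 s LR hmLR RG k (hRGmeas k) (hRGle k)).sub
      (measurable_G2 r LS hmLS RG k (hRGmeas k))).abs
  have hDfin : ∀ k, D k ≠ ⊤ := by
    intro k
    have hb : ∀ ω : Ω, |(∑ i ∈ Finset.range (RG k ω), s (LR i ω))
        - ∑ j ∈ Finset.range (k - RG k ω), r (LS j ω)| ≤ (k : ℝ) := by
      intro ω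
      have h1 : (∑ i ∈ Finset.range (RG k ω), s (LR i ω)) ≤ k := by
        calc (∑ i ∈ Finset.range (RG k ω), s (LR i ω))
            ≤ ∑ i ∈ Finset.range (RG k ω), (1:ℝ) :=
              Finset.sum_le_sum fun i _ => hs1 (LR i ω)
          _ = RG k ω := by simp
          _ ≤ (k:ℝ) := by exact_mod_cast hRGle k ω
      have h2 : (∑ j ∈ Finset.range (k - RG k ω), r (LS j ω)) ≤ k := by
        calc (∑ j ∈ Finset.range (k - RG k ω), r (LS j ω))
            ≤ ∑ j ∈ Finset.range (k - RG k ω), (1:ℝ) :=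
              Finset.sum_le_sum fun j _ => hr1 (LS j ω)
          _ = (k - RG k ω : ℕ) := by simp
          _ ≤ (k:ℝ) := by exact_mod_cast Nat.sub_le k _
      have h3 : 0 ≤ ∑ i ∈ Finset.range (RG k ω), s (LR i ω) :=
        Finset.sum_nonneg fun i _ => hs (LR i ω)
      have h4 : 0 ≤ ∑ j ∈ Finset.range (k - RG k ω), r (LS j ω) :=
        Finset.sum_nonneg fun j _ => hr (LS j ω)
      rw [abs_le]
      constructor <;> linarith
    have : D k ≤ ENNReal.ofReal k := by
      rw [hDdef]
      calc ∫⁻ ω, ENNReal.ofReal |(∑ i ∈ Finset.range (RG k ω), s (LR i ω))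
            - ∑ j ∈ Finset.range (k - RG k ω), r (LS j ω)| ∂P
          ≤ ∫⁻ _, ENNReal.ofReal k ∂P :=
            lintegral_mono fun ω => ENNReal.ofReal_le_ofReal (hb ω)
        _ = ENNReal.ofReal k := by rw [lintegral_const, measure_univ, mul_one]
    exact ne_top_of_le_ne_top ENNReal.ofReal_ne_top this
  -- the main lintegral formula
  have hMain : ∀ n : ℕ, ∫⁻ ω, ENNReal.ofReal (MG n ω) ∂P
      = ∑ k ∈ Finset.range n, (D k + k * ENNReal.ofReal μ) / 2 := by
    intro n
    induction n with
    | zero =>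
      have h0 : ∀ ω : Ω, ENNReal.ofReal (MG 0 ω) = 0 := by
        intro ω
        rw [hMG 0 ω]
        simp
      rw [lintegral_congr h0]
      simp
    | succ n ih =>
      rw [lintegral_congr (hstepE n), lintegral_add_left ((hMGmeas n).ennreal_ofReal), ih]
      have hD : ∫⁻ ω, (if (∑ i ∈ Finset.range (RG n ω), s (LR i ω))
              ≤ ∑ j ∈ Finset.range (n - RG n ω), r (LS j ω)
          then ∑ j ∈ Finset.range (n - RG n ω),
              (if LR (RG n ω) ω = LS j ω then (1 : ℝ≥0∞) else 0)
          else ∑ i ∈ Finset.range (RG n ω),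
              (if LR i ω = LS (n - RG n ω) ω then (1 : ℝ≥0∞) else 0)) ∂P
          = (D n + n * ENNReal.ofReal μ) / 2 := by
        rw [keyDelta P r s LR LS hmLR hmLS hindep hdR hdS hr hs RG n (hRGmeas n)
          (hgf n) (hRGle n)]
        have hmax : ∀ ω : Ω, ENNReal.ofReal (max (∑ i ∈ Finset.range (RG n ω), s (LR i ω))
              (∑ j ∈ Finset.range (n - RG n ω), r (LS j ω)))
            = (ENNReal.ofReal |(∑ i ∈ Finset.range (RG n ω), s (LR i ω))
                  - ∑ j ∈ Finset.range (n - RG n ω), r (LS j ω)|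
              + ENNReal.ofReal ((∑ i ∈ Finset.range (RG n ω), s (LR i ω))
                  + ∑ j ∈ Finset.range (n - RG n ω), r (LS j ω))) / 2 :=
          fun ω => ofReal_max_eq (Finset.sum_nonneg fun i _ => hs (LR i ω))
            (Finset.sum_nonneg fun j _ => hr (LS j ω))
        rw [lintegral_congr hmax]
        simp_rw [div_eq_mul_inv]
        rw [lintegral_mul_const' 2⁻¹ _ (by simp)]
        rw [lintegral_add_left ((hmabs n).ennreal_ofReal)]
        rw [keySum P r s LR LS hmLR hmLS hindep hdR hdS hr hs μ hμo RG hRGmeas hRG0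
          hgf hRGle hg1 hg0 hgeq n]
      rw [hD, Finset.sum_range_succ]
  -- conversion to Bochner integrals
  have hconv : ∀ (f : Ω → ℝ), Measurable f → (∀ ω, 0 ≤ f ω) →
      ∫ ω, f ω ∂P = (∫⁻ ω, ENNReal.ofReal (f ω) ∂P).toReal := fun f hf h0 =>
    integral_eq_lintegral_of_nonneg_ae (Filter.Eventually.of_forall h0) hf.aestronglyMeasurable
  intro n
  rw [hconv (MG n) (hMGmeas n) (hMGnonneg n), hMain n]
  have habs : ∀ k, ∫ ω, |(∑ i ∈ Finset.range (RG k ω), s (LR i ω))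
      - ∑ j ∈ Finset.range (k - RG k ω), r (LS j ω)| ∂P = (D k).toReal := by
    intro k
    rw [hconv _ (hmabs k) (fun ω => abs_nonneg _)]
  rw [Finset.sum_congr rfl fun k _ => habs k]
  -- final real computation
  have hD0 : D 0 = 0 := by
    show (∫⁻ ω, ENNReal.ofReal
        |(∑ i ∈ Finset.range (RG 0 ω), s (LR i ω))
          - ∑ j ∈ Finset.range (0 - RG 0 ω), r (LS j ω)| ∂P) = 0
    have h0 : ∀ ω : Ω, ENNReal.ofReal
        |(∑ i ∈ Finset.range (RG 0 ω), s (LR i ω))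
          - ∑ j ∈ Finset.range (0 - RG 0 ω), r (LS j ω)| = 0 := by
      intro ω
      rw [hRG0 ω]
      simp
    rw [lintegral_congr h0]
    simp
  have hterm : ∀ k : ℕ, (D k + k * ENNReal.ofReal μ) / 2
      = ENNReal.ofReal (((D k).toReal + k * μ) / 2) := by
    intro k
    rw [ENNReal.ofReal_div_of_pos (by norm_num), ENNReal.ofReal_add ENNReal.toReal_nonneg
      (mul_nonneg (Nat.cast_nonneg k) (le_of_lt hμpos)), ENNReal.ofReal_toReal (hDfin k),
      ENNReal.ofReal_mul (Nat.cast_nonneg k), ENNReal.ofReal_natCast]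
    norm_num
  rw [Finset.sum_congr rfl fun k _ => hterm k,
    ← ENNReal.ofReal_sum_of_nonneg fun k _ => div_nonneg
      (add_nonneg ENNReal.toReal_nonneg (mul_nonneg (Nat.cast_nonneg k) (le_of_lt hμpos)))
      (by norm_num),
    ENNReal.toReal_ofReal (Finset.sum_nonneg fun k _ => div_nonneg
      (add_nonneg ENNReal.toReal_nonneg (mul_nonneg (Nat.cast_nonneg k) (le_of_lt hμpos)))
      (by norm_num))]
  have hIco : ∑ k ∈ Finset.range n, (D k).toReal = ∑ k ∈ Finset.Ico 1 n, (D k).toReal := by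
    rcases Nat.eq_zero_or_pos n with rfl | hn
    · simp
    · rw [Finset.range_eq_Ico, Finset.sum_eq_sum_Ico_succ_bot hn, hD0]
      simp
  have hgauss : (∑ k ∈ Finset.range n, (k:ℝ)) = (n:ℝ) * ((n:ℝ) - 1) / 2 := by
    rcases Nat.eq_zero_or_pos n with rfl | hn
    · simp
    · have h1 := Finset.sum_range_id_mul_two n
      have h2 : ((∑ i ∈ Finset.range n, i : ℕ) : ℝ) * 2 = (n:ℝ) * ((n:ℝ) - 1) := by
        rw [← Nat.cast_ofNat, ← Nat.cast_mul, h1, Nat.cast_mul, Nat.cast_sub hn]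
        norm_num
      push_cast at h2 ⊢
      linarith
  calc ∑ k ∈ Finset.range n, ((D k).toReal + k * μ) / 2
      = (∑ k ∈ Finset.range n, (D k).toReal) / 2
        + (∑ k ∈ Finset.range n, (k:ℝ)) * (μ / 2) := by
        rw [Finset.sum_mul, Finset.sum_div, ← Finset.sum_add_distrib]
        refine Finset.sum_congr rfl fun k _ => ?_
        ring
    _ = (1 / 2) * ∑ k ∈ Finset.Ico 1 n, (D k).toReal + (n:ℝ) * ((n:ℝ) - 1) * μ / 4 := by
        rw [hIco, hgauss]
        ring
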